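/- For every constant κ > 0, there exists a joint distribution of four random variables (A, B, C, D) on finite sets such that I(C:D) > I(C:D|A) + I(C:D|B) + I(A:B) + κ·(I(A:B|C) + I(B:D|C)). -/

import Mathlib

open scoped BigOperators Classical

noncomputable section

/-- `p` is a probability mass function on the finite type `Ω`. -/
def IsPMF {Ω : Type*} [Fintype Ω] (p : Ω → ℝ) : Prop :=
  (∀ ω, 0 ≤ p ω) ∧ ∑ ω, p ω = 1

/-- Probability of the event `X = s` under `p`. -/
def prOf {Ω S : Type*} [Fintype Ω] [DecidableEq S] (p : Ω → ℝ) (X : Ω → S) (s : S) : ℝ :=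
  ∑ ω ∈ Finset.univ.filter (fun ω => X ω = s), p ω

/-- Shannon entropy (in bits) of the random variable `X` under the pmf `p`. -/
def ent {Ω S : Type*} [Fintype Ω] [Fintype S] [DecidableEq S] (p : Ω → ℝ) (X : Ω → S) : ℝ :=
  - ∑ s : S, prOf p X s * Real.logb 2 (prOf p X s)

/-- Mutual information `I(X:Y) = H(X) + H(Y) - H(X,Y)`. -/
def mi {Ω S T : Type*} [Fintype Ω] [Fintype S] [Fintype T] [DecidableEq S] [DecidableEq T]
    (p : Ω → ℝ) (X : Ω → S) (Y : Ω → T) : ℝ :=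
  ent p X + ent p Y - ent p (fun ω => (X ω, Y ω))

/-- Conditional mutual information `I(X:Y|Z) = H(X,Z) + H(Y,Z) - H(X,Y,Z) - H(Z)`. -/
def cmi {Ω S T U : Type*} [Fintype Ω] [Fintype S] [Fintype T] [Fintype U]
    [DecidableEq S] [DecidableEq T] [DecidableEq U]
    (p : Ω → ℝ) (X : Ω → S) (Y : Ω → T) (Z : Ω → U) : ℝ :=
  ent p (fun ω => (X ω, Z ω)) + ent p (fun ω => (Y ω, Z ω))
    - ent p (fun ω => (X ω, Y ω, Z ω)) - ent p Z

/-- Conditional entropy `H(X|Y) = H(X,Y) - H(Y)`. -/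
def condEnt {Ω S T : Type*} [Fintype Ω] [Fintype S] [Fintype T] [DecidableEq S] [DecidableEq T]
    (p : Ω → ℝ) (X : Ω → S) (Y : Ω → T) : ℝ :=
  ent p (fun ω => (X ω, Y ω)) - ent p Y

/-- The four coordinate random variables on `Bool × Bool × Bool × Bool`. -/
def vA : Bool × Bool × Bool × Bool → Bool := fun ω => ω.1
def vB : Bool × Bool × Bool × Bool → Bool := fun ω => ω.2.1
def vC : Bool × Bool × Bool × Bool → Bool := fun ω => ω.2.2.1
def vD : Bool × Bool × Bool × Bool → Bool := fun ω => ω.2.2.2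

/-- The witness distribution: `P(0,0,0,0) = 3ε`,
`P(1,1,0,0) = P(1,0,1,0) = P(0,1,0,1) = 1/3 - ε`. -/
def pW (ε : ℝ) : Bool × Bool × Bool × Bool → ℝ :=
  fun ω => if ω = (false,false,false,false) then 3*ε
    else if ω = (true,true,false,false) then 1/3 - ε
    else if ω = (true,false,true,false) then 1/3 - ε
    else if ω = (false,true,false,true) then 1/3 - ε
    else 0

lemma prOf_eq_sum_ite {Ω S : Type*} [Fintype Ω] [DecidableEq S] (p : Ω → ℝ) (X : Ω → S) (s : S) :
    prOf p X s = ∑ ω, if X ω = s then p ω else 0 := by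
  unfold prOf; rw [Finset.sum_filter]

lemma pW_cmi_CDA (ε : ℝ) : cmi (pW ε) vC vD vA = 0 := by
  simp [cmi, ent, prOf_eq_sum_ite, vA, vC, vD, pW, Finset.sum_filter, Fintype.sum_prod_type,
    Fintype.sum_bool]
  ring_nf

lemma pW_cmi_CDB (ε : ℝ) : cmi (pW ε) vC vD vB = 0 := by
  simp [cmi, ent, prOf_eq_sum_ite, vB, vC, vD, pW, Finset.sum_filter, Fintype.sum_prod_type,
    Fintype.sum_bool]
  ring_nf

lemma pW_mi_CD (ε : ℝ) : mi (pW ε) vC vD =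
    (1/3+2*ε) * Real.logb 2 (1/3+2*ε) - 2*((2/3+ε) * Real.logb 2 (2/3+ε)) := by
  simp [mi, ent, prOf_eq_sum_ite, vC, vD, pW, Finset.sum_filter, Fintype.sum_prod_type, Fintype.sum_bool]
  ring_nf

lemma pW_mi_AB (ε : ℝ) : mi (pW ε) vA vB =
    3*((1/3-ε) * Real.logb 2 (1/3-ε)) + 3*ε * Real.logb 2 (3*ε)
      - 2*((2/3-2*ε) * Real.logb 2 (2/3-2*ε)) - 2*((1/3+2*ε) * Real.logb 2 (1/3+2*ε)) := by
  simp [mi, ent, prOf_eq_sum_ite, vA, vB, pW, Finset.sum_filter, Fintype.sum_prod_type, Fintype.sum_bool]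
  ring_nf

lemma pW_cmi_ABC (ε : ℝ) : cmi (pW ε) vA vB vC =
    (1/3-ε) * Real.logb 2 (1/3-ε) + (2/3+ε) * Real.logb 2 (2/3+ε)
      - (1/3+2*ε) * Real.logb 2 (1/3+2*ε) - (2/3-2*ε) * Real.logb 2 (2/3-2*ε) := by
  simp [cmi, ent, prOf_eq_sum_ite, vA, vB, vC, pW, Finset.sum_filter, Fintype.sum_prod_type,
    Fintype.sum_bool]
  ring_nf

lemma pW_cmi_BDC (ε : ℝ) : cmi (pW ε) vB vD vC =
    (1/3-ε) * Real.logb 2 (1/3-ε) + (2/3+ε) * Real.logb 2 (2/3+ε)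
      - (1/3+2*ε) * Real.logb 2 (1/3+2*ε) - (2/3-2*ε) * Real.logb 2 (2/3-2*ε) := by
  simp [cmi, ent, prOf_eq_sum_ite, vB, vC, vD, pW, Finset.sum_filter, Fintype.sum_prod_type,
    Fintype.sum_bool]
  ring_nf

lemma pW_isPMF {ε : ℝ} (h0 : 0 ≤ ε) (h1 : ε ≤ 1/3) : IsPMF (pW ε) := by
  constructor
  · intro ω
    unfold pW
    split_ifs <;> linarith
  · simp [pW, Fintype.sum_prod_type, Fintype.sum_bool]
    ring

set_option maxHeartbeats 1000000 in
lemma key_ineq (κ ε : ℝ) (hκ : 0 < κ) (hε : 0 < ε) (hεs : ε < 1/1000)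
    (hc : Real.log (3*ε) = -(8*κ+10) * Real.log 2) :
    (2*κ+3) * ((1/3-ε) * Real.logb 2 (1/3-ε) - (1/3+2*ε) * Real.logb 2 (1/3+2*ε))
      + 3*ε * Real.logb 2 (3*ε)
    < (2*κ+2) * ((2/3-2*ε) * Real.logb 2 (2/3-2*ε) - (2/3+ε) * Real.logb 2 (2/3+ε)) := by
  have l2pos : 0 < Real.log 2 := Real.log_pos one_lt_two
  have hl2 : 0.6931 < Real.log 2 := by
    have := Real.log_two_gt_d9; linarith
  have ht : (0:ℝ) < 1/3 - ε := by linarith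
  have ht2 : (0:ℝ) < 1/3 + 2*ε := by linarith
  have hb : (0:ℝ) < 2/3 - 2*ε := by linarith
  have he : (0:ℝ) < 2/3 + ε := by linarith
  have key2 : (2*κ+3) * ((1/3-ε) * Real.log (1/3-ε) - (1/3+2*ε) * Real.log (1/3+2*ε))
      + 3*ε * Real.log (3*ε)
      < (2*κ+2) * ((2/3-2*ε) * Real.log (2/3-2*ε) - (2/3+ε) * Real.log (2/3+ε)) := by
    have f1 : Real.log (1/3-ε) ≤ Real.log (1/3+2*ε) :=
      Real.log_le_log ht (by linarith)
    have h14 : Real.log (1/4 : ℝ) = -(2*Real.log 2) := by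
      rw [show (1/4:ℝ) = (4:ℝ)⁻¹ by norm_num, Real.log_inv,
        show (4:ℝ) = 2^(2:ℕ) by norm_num, Real.log_pow]
      push_cast; ring
    have f2 : -(2*Real.log 2) ≤ Real.log (1/3+2*ε) := by
      rw [← h14]; exact Real.log_le_log (by norm_num) (by linarith)
    have f3 : Real.log (2/3+ε) ≤ 0 := Real.log_nonpos (by linarith) (by linarith)
    have f4 : Real.log (2/3+ε) - Real.log (2/3-2*ε) ≤ 3*ε/(2/3-2*ε) := by
      have h0 : (0:ℝ) < (2/3+ε)/(2/3-2*ε) := by positivity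
      have h1 := Real.log_le_sub_one_of_pos h0
      rw [Real.log_div (ne_of_gt he) (ne_of_gt hb)] at h1
      have h2 : (2/3+ε)/(2/3-2*ε) - 1 = 3*ε/(2/3-2*ε) := by
        rw [div_sub_one hb.ne']; ring_nf
      linarith [h2.le, h2.ge]
    have s3 : (1/3-ε) * Real.log (1/3-ε) - (1/3+2*ε) * Real.log (1/3+2*ε)
        ≤ 6*ε*Real.log 2 := by
      nlinarith [mul_le_mul_of_nonneg_left f1 ht.le,
        mul_le_mul_of_nonneg_left f2 (show (0:ℝ) ≤ 3*ε by linarith)]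
    have s4 : -(3*ε) ≤ (2/3-2*ε) * Real.log (2/3-2*ε) - (2/3+ε) * Real.log (2/3+ε) := by
      have hf4 : (2/3-2*ε) * (Real.log (2/3+ε) - Real.log (2/3-2*ε)) ≤ 3*ε := by
        have h5 := mul_le_mul_of_nonneg_left f4 hb.le
        have h6 : (2/3-2*ε) * (3*ε/(2/3-2*ε)) = 3*ε := by
          rw [mul_comm, div_mul_cancel₀ _ hb.ne']
        linarith [h6.le, h6.ge]
      nlinarith [mul_nonpos_of_nonneg_of_nonpos (show (0:ℝ) ≤ 3*ε by linarith) f3]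
    have t3 : (2*κ+3) * ((1/3-ε) * Real.log (1/3-ε) - (1/3+2*ε) * Real.log (1/3+2*ε))
        ≤ (2*κ+3) * (6*ε*Real.log 2) := mul_le_mul_of_nonneg_left s3 (by linarith)
    have t4 : (2*κ+2) * (-(3*ε))
        ≤ (2*κ+2) * ((2/3-2*ε) * Real.log (2/3-2*ε) - (2/3+ε) * Real.log (2/3+ε)) :=
      mul_le_mul_of_nonneg_left s4 (by linarith)
    rw [hc]
    have hP : 0 < (κ+1) * ε * (12*Real.log 2 - 6) :=
      mul_pos (mul_pos (by linarith) hε) (by linarith)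
    linarith [hP, t3, t4]
  have eL : (2*κ+3) * ((1/3-ε) * Real.logb 2 (1/3-ε) - (1/3+2*ε) * Real.logb 2 (1/3+2*ε))
      + 3*ε * Real.logb 2 (3*ε)
      = ((2*κ+3) * ((1/3-ε) * Real.log (1/3-ε) - (1/3+2*ε) * Real.log (1/3+2*ε))
        + 3*ε * Real.log (3*ε)) / Real.log 2 := by
    simp only [Real.logb]; ring
  have eR : (2*κ+2) * ((2/3-2*ε) * Real.logb 2 (2/3-2*ε) - (2/3+ε) * Real.logb 2 (2/3+ε))
      = ((2*κ+2) * ((2/3-2*ε) * Real.log (2/3-2*ε) - (2/3+ε) * Real.log (2/3+ε))) / Real.log 2 := by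
    simp only [Real.logb]; ring
  rw [eL, eR]
  exact (div_lt_div_iff_of_pos_right l2pos).mpr key2

theorem matus_essentially_conditional (κ : ℝ) (hκ : 0 < κ) :
    ∃ p : Bool × Bool × Bool × Bool → ℝ, IsPMF p ∧
      cmi p vC vD vA + cmi p vC vD vB + mi p vA vB
          + κ * (cmi p vA vB vC + cmi p vB vD vC)
        < mi p vC vD := by
  set ε : ℝ := (2:ℝ)^(-(8*κ+10)) / 3 with hεdef
  have hpow : (0:ℝ) < (2:ℝ)^(-(8*κ+10)) := Real.rpow_pos_of_pos two_pos _
  have hε : 0 < ε := by positivity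
  have hεs : ε < 1/1000 := by
    have h1 : (2:ℝ)^(-(8*κ+10)) < (2:ℝ)^(-10:ℝ) := by
      exact (Real.rpow_lt_rpow_left_iff (x := 2) one_lt_two).mpr (by linarith)
    have h2 : (2:ℝ)^(-10:ℝ) = 1/1024 := by
      rw [show (-10:ℝ) = ((-10:ℤ):ℝ) by norm_num, Real.rpow_intCast]
      norm_num
    have h3 : (2:ℝ)^(-(8*κ+10)) < 1/1024 := by rw [← h2]; exact h1
    rw [hεdef]
    linarith
  have h3e : 3*ε = (2:ℝ)^(-(8*κ+10)) := by
    rw [hεdef, mul_div_cancel₀ _ (by norm_num : (3:ℝ) ≠ 0)]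
  have hc : Real.log (3*ε) = -(8*κ+10) * Real.log 2 := by
    rw [h3e, Real.log_rpow two_pos]
  refine ⟨pW ε, pW_isPMF hε.le (by linarith), ?_⟩
  rw [pW_cmi_CDA, pW_cmi_CDB, pW_mi_CD, pW_mi_AB, pW_cmi_ABC, pW_cmi_BDC]
  have := key_ineq κ ε hκ hε hεs hc
  nlinarith [this]

end
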